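/- arXiv:1702.01914 — 2 statements merged into one kernel-verified Lean document; each statement's English description precedes it below -/
import Mathlib

section
/- For any two distinct lines L, R in projective n-space (n ≥ 2) meeting in a point, and any finite subscheme E of L ∪ R, one has deg(E ∩ L) + deg(E ∩ R) - 1 ≤ deg(E) ≤ deg(E ∩ L) + deg(E ∩ R). -/
open MvPolynomial Module

/-- The (scheme-theoretic) ideal of the affine line `{p + t • v : t}` in `𝔸ⁿ`,
i.e. the kernel of the substitution `X i ↦ p i + v i * T`. -/
noncomputable def lineIdeal {k : Type*} [Field k] {n : ℕ} (p v : Fin n → k) :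
    Ideal (MvPolynomial (Fin n) k) :=
  RingHom.ker (MvPolynomial.aeval (R := k)
    (fun i => Polynomial.C (p i) + Polynomial.C (v i) * Polynomial.X) :
      MvPolynomial (Fin n) k →ₐ[k] Polynomial k)

section Aux

variable {k : Type*} [Field k] {n : ℕ}

private lemma finrank_le_of_surj {V W : Type*} [AddCommGroup V] [Module k V]
    [AddCommGroup W] [Module k W] [Module.Finite k V] (f : V →ₗ[k] W)
    (h : Function.Surjective f) : finrank k W ≤ finrank k V := by
  have h1 := f.finrank_range_le
  rwa [LinearMap.range_eq_top.mpr h, finrank_top] at h1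

/-- From linear independence of `v, w`, the pairing `c ↦ (c·v, c·w)` is surjective. -/
private lemma exists_dual (v w : Fin n → k) (hvw : LinearIndependent k ![v, w]) (a b : k) :
    ∃ c : Fin n → k, (∑ i, c i * v i) = a ∧ (∑ i, c i * w i) = b := by
  -- first find a nonzero 2×2 minor
  obtain ⟨i, j, hD⟩ : ∃ i j, v i * w j - v j * w i ≠ 0 := by
    by_contra h
    push_neg at h
    have hv : v ≠ 0 := by
      have := hvw.ne_zero 0
      simpa using this
    obtain ⟨i, hi⟩ : ∃ i, v i ≠ 0 := by
      by_contra h'; push_neg at h'; exact hv (funext h')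
    have hprop : (w i / v i) • v + (-1 : k) • w = 0 := by
      funext j
      have hij : v i * w j = v j * w i := sub_eq_zero.mp (h i j)
      simp only [Pi.add_apply, Pi.smul_apply, smul_eq_mul, Pi.zero_apply]
      field_simp
      linear_combination -hij
    have := (LinearIndependent.pair_iff.mp hvw _ _ hprop).2
    norm_num at this
  have hij : i ≠ j := by rintro rfl; simp at hD
  set D := v i * w j - v j * w i with hDdef
  refine ⟨Pi.single i ((a * w j - b * v j) / D) + Pi.single j ((b * v i - a * w i) / D), ?_, ?_⟩
  · rw [Finset.sum_congr rfl (fun x _ => by rw [Pi.add_apply, add_mul]), Finset.sum_add_distrib]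
    rw [Finset.sum_eq_single i (fun x _ hx => by simp [Pi.single_apply, hx]) (by simp),
      Finset.sum_eq_single j (fun x _ hx => by simp [Pi.single_apply, hx]) (by simp)]
    simp only [Pi.single_eq_same]
    field_simp
    ring
  · rw [Finset.sum_congr rfl (fun x _ => by rw [Pi.add_apply, add_mul]), Finset.sum_add_distrib]
    rw [Finset.sum_eq_single i (fun x _ hx => by simp [Pi.single_apply, hx]) (by simp),
      Finset.sum_eq_single j (fun x _ hx => by simp [Pi.single_apply, hx]) (by simp)]
    simp only [Pi.single_eq_same]
    field_simp
    ring

/-- The image of `∑ c j (X j - p j)` under the line substitution is `C (c·v) * X`. -/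
private lemma aeval_ell (p v c : Fin n → k) :
    (MvPolynomial.aeval (R := k)
        (fun i => Polynomial.C (p i) + Polynomial.C (v i) * Polynomial.X))
      (∑ j, MvPolynomial.C (c j) * (MvPolynomial.X j - MvPolynomial.C (p j)))
      = Polynomial.C (∑ j, c j * v j) * Polynomial.X := by
  rw [map_sum]
  have : ∀ j : Fin n,
      (MvPolynomial.aeval (R := k)
        (fun i => Polynomial.C (p i) + Polynomial.C (v i) * Polynomial.X))
        (MvPolynomial.C (c j) * (MvPolynomial.X j - MvPolynomial.C (p j)))
        = Polynomial.C (c j * v j) * Polynomial.X := by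
    intro j
    simp only [map_mul, map_sub, aeval_X, aeval_C, Polynomial.algebraMap_eq]
    ring
  rw [Finset.sum_congr rfl (fun j _ => this j), ← Finset.sum_mul, ← map_sum]

private lemma ell_mem_lineIdeal (p v c : Fin n → k) (hc : (∑ j, c j * v j) = 0) :
    (∑ j, MvPolynomial.C (c j) * (MvPolynomial.X j - MvPolynomial.C (p j))) ∈ lineIdeal p v := by
  rw [lineIdeal, RingHom.mem_ker]
  show (MvPolynomial.aeval _) _ = 0
  rw [aeval_ell, hc]
  simp

/-- Evaluating the line parametrization at `T = 0` recovers evaluation at `p`. -/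
private lemma eval_zero_comp (p v : Fin n → k) (x : MvPolynomial (Fin n) k) :
    Polynomial.aeval (0 : k)
      ((MvPolynomial.aeval (R := k)
        (fun i => Polynomial.C (p i) + Polynomial.C (v i) * Polynomial.X)) x)
      = MvPolynomial.aeval p x := by
  have : (Polynomial.aeval (0 : k)).comp
      (MvPolynomial.aeval (R := k)
        (fun i => Polynomial.C (p i) + Polynomial.C (v i) * Polynomial.X))
      = MvPolynomial.aeval p := by
    apply MvPolynomial.algHom_ext
    intro i
    simp
  calc Polynomial.aeval (0 : k) ((MvPolynomial.aeval (R := k)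
        (fun i => Polynomial.C (p i) + Polynomial.C (v i) * Polynomial.X)) x)
      = ((Polynomial.aeval (0 : k)).comp (MvPolynomial.aeval (R := k)
        (fun i => Polynomial.C (p i) + Polynomial.C (v i) * Polynomial.X))) x := rfl
    _ = MvPolynomial.aeval p x := by rw [this]

end Aux

set_option maxHeartbeats 2000000 in
set_option synthInstance.maxHeartbeats 1000000 in
/-- Let `L` and `R` be two distinct lines in projective `n`-space (`n ≥ 2`) meeting in a point
(in an affine chart containing the zero-dimensional scheme `E`: `L = {p + t•v}`,
`R = {p + t•w}` with `v, w` linearly independent), and let `E` be a finite subscheme of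
`L ∪ R`, given by an ideal `I` containing the ideal of `L ∪ R`.  Then
`deg(E∩L) + deg(E∩R) - 1 ≤ deg(E) ≤ deg(E∩L) + deg(E∩R)`, where degrees are lengths,
i.e. `k`-dimensions of the corresponding affine coordinate rings. -/
theorem stmt5 (k : Type*) [Field k] [IsAlgClosed k] (n : ℕ) (hn : 2 ≤ n)
    (p v w : Fin n → k) (hvw : LinearIndependent k ![v, w])
    (I : Ideal (MvPolynomial (Fin n) k))
    (hE : lineIdeal p v ⊓ lineIdeal p w ≤ I)
    [FiniteDimensional k (MvPolynomial (Fin n) k ⧸ I)] :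
    finrank k (MvPolynomial (Fin n) k ⧸ (I ⊔ lineIdeal p v)) +
        finrank k (MvPolynomial (Fin n) k ⧸ (I ⊔ lineIdeal p w)) - 1 ≤
      finrank k (MvPolynomial (Fin n) k ⧸ I) ∧
    finrank k (MvPolynomial (Fin n) k ⧸ I) ≤
      finrank k (MvPolynomial (Fin n) k ⧸ (I ⊔ lineIdeal p v)) +
        finrank k (MvPolynomial (Fin n) k ⧸ (I ⊔ lineIdeal p w)) := by
  classical
  set J₁ := lineIdeal p v with hJ₁
  set J₂ := lineIdeal p w with hJ₂
  -- the two parametrizations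
  set π₁ : MvPolynomial (Fin n) k →ₐ[k] Polynomial k := MvPolynomial.aeval (R := k)
    (fun i => Polynomial.C (p i) + Polynomial.C (v i) * Polynomial.X) with hπ₁
  set π₂ : MvPolynomial (Fin n) k →ₐ[k] Polynomial k := MvPolynomial.aeval (R := k)
    (fun i => Polynomial.C (p i) + Polynomial.C (w i) * Polynomial.X) with hπ₂
  have memJ₁ : ∀ x : MvPolynomial (Fin n) k, x ∈ J₁ ↔ π₁ x = 0 := fun x => Iff.rfl
  have memJ₂ : ∀ x : MvPolynomial (Fin n) k, x ∈ J₂ ↔ π₂ x = 0 := fun x => Iff.rfl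
  -- the element f ∈ J₁ with π₂ f = X
  obtain ⟨cf, hcfv, hcfw⟩ := exists_dual v w hvw 0 1
  set f : MvPolynomial (Fin n) k := ∑ j, MvPolynomial.C (cf j) * (MvPolynomial.X j - MvPolynomial.C (p j)) with hfdef
  have hfJ₁ : f ∈ J₁ := ell_mem_lineIdeal p v cf hcfv
  have hfπ₂ : π₂ f = Polynomial.X := by
    rw [hπ₂, hfdef, aeval_ell, hcfw]; simp
  -- π₂ is surjective
  have hπ₂surj : Function.Surjective π₂ := by
    rw [← AlgHom.range_eq_top, ← top_le_iff, ← Polynomial.adjoin_X]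
    apply Algebra.adjoin_le
    rintro x hx
    rcases hx with rfl
    exact ⟨f, hfπ₂⟩
  -- every element of J₁ lies in f•S + I
  have hkey : ∀ x ∈ J₁, ∃ g : MvPolynomial (Fin n) k, x - g * f ∈ I := by
    intro x hx
    have hx0 : MvPolynomial.aeval p x = 0 := by
      rw [← eval_zero_comp p v x]
      rw [(memJ₁ x).mp hx]; simp
    have hdvd : Polynomial.X ∣ π₂ x := by
      rw [Polynomial.X_dvd_iff, Polynomial.coeff_zero_eq_eval_zero]
      have h2 := eval_zero_comp p w x
      rw [hx0] at h2
      rw [← Polynomial.coe_aeval_eq_eval]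
      exact h2
    obtain ⟨h, hh⟩ := hdvd
    obtain ⟨g, hg⟩ := hπ₂surj h
    refine ⟨g, hE (Submodule.mem_inf.mpr ⟨?_, ?_⟩)⟩
    · exact J₁.sub_mem hx (J₁.mul_mem_left g hfJ₁)
    · refine (memJ₂ _).mpr ?_
      rw [map_sub, map_mul, hg, hfπ₂, hh]
      ring
  -- each X i - C (p i) is in J₁ ⊔ J₂
  have hXmem : ∀ i : Fin n, MvPolynomial.X i - MvPolynomial.C (p i) ∈ J₁ ⊔ J₂ := by
    intro i
    obtain ⟨c, hcv, hcw⟩ := exists_dual v w hvw 0 (w i)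
    set d : Fin n → k := fun j => (if i = j then 1 else 0) - c j with hd
    have hdw : (∑ j, d j * w j) = 0 := by
      rw [hd]
      simp only [sub_mul, Finset.sum_sub_distrib, hcw, ite_mul, one_mul, zero_mul,
        Finset.sum_ite_eq, Finset.mem_univ, if_true]
      ring
    have h1 : (∑ j, MvPolynomial.C (c j) * (MvPolynomial.X j - MvPolynomial.C (p j))) ∈ J₁ :=
      ell_mem_lineIdeal p v c hcv
    have h2 : (∑ j, MvPolynomial.C (d j) * (MvPolynomial.X j - MvPolynomial.C (p j))) ∈ J₂ :=
      ell_mem_lineIdeal p w d hdw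
    have hsum : (∑ j, MvPolynomial.C (c j) * (MvPolynomial.X j - MvPolynomial.C (p j))) +
        (∑ j, MvPolynomial.C (d j) * (MvPolynomial.X j - MvPolynomial.C (p j)))
        = MvPolynomial.X i - MvPolynomial.C (p i) := by
      rw [← Finset.sum_add_distrib]
      have : ∀ j : Fin n, MvPolynomial.C (c j) * (MvPolynomial.X j - MvPolynomial.C (p j)) +
          MvPolynomial.C (d j) * (MvPolynomial.X j - MvPolynomial.C (p j))
          = (if i = j then (MvPolynomial.X j - MvPolynomial.C (p j)) else 0) := by
        intro j
        rw [← add_mul, ← MvPolynomial.C_add, hd]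
        by_cases hij : i = j <;> simp [hij]
      rw [Finset.sum_congr rfl (fun j _ => this j), Finset.sum_ite_eq, if_pos (Finset.mem_univ i)]
    rw [← hsum]
    exact Submodule.add_mem _ (Ideal.mem_sup_left h1) (Ideal.mem_sup_right h2)
  -- every polynomial is a constant modulo J₁ ⊔ J₂
  have hconst : ∀ g : MvPolynomial (Fin n) k, ∃ c : k, g - MvPolynomial.C c ∈ J₁ ⊔ J₂ := by
    intro g
    induction g using MvPolynomial.induction_on with
    | C a => exact ⟨a, by simp⟩
    | add g h ihg ihh =>
      obtain ⟨cg, hcg⟩ := ihg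
      obtain ⟨ch, hch⟩ := ihh
      refine ⟨cg + ch, ?_⟩
      have : g + h - MvPolynomial.C (cg + ch) =
          (g - MvPolynomial.C cg) + (h - MvPolynomial.C ch) := by rw [MvPolynomial.C_add]; ring
      rw [this]
      exact Submodule.add_mem _ hcg hch
    | mul_X g i ihg =>
      obtain ⟨c, hc⟩ := ihg
      refine ⟨c * p i, ?_⟩
      have : g * MvPolynomial.X i - MvPolynomial.C (c * p i) =
          g * (MvPolynomial.X i - MvPolynomial.C (p i)) +
          (g - MvPolynomial.C c) * MvPolynomial.C (p i) := by
        rw [MvPolynomial.C_mul]; ring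
      rw [this]
      exact Submodule.add_mem _ (Ideal.mul_mem_left _ g (hXmem i))
        (Ideal.mul_mem_right _ _ hc)
  -- Now pass to the quotient M = S ⧸ I
  set mk : MvPolynomial (Fin n) k →ₐ[k] (MvPolynomial (Fin n) k ⧸ I) :=
    Ideal.Quotient.mkₐ k I with hmk
  have hmksurj : Function.Surjective mk := Ideal.Quotient.mkₐ_surjective k I
  set A : Submodule k (MvPolynomial (Fin n) k ⧸ I) := (Ideal.map mk J₁).restrictScalars k with hA
  set B : Submodule k (MvPolynomial (Fin n) k ⧸ I) := (Ideal.map mk J₂).restrictScalars k with hB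
  -- identify the two quotients
  have hQA : finrank k (MvPolynomial (Fin n) k ⧸ (I ⊔ J₁)) =
      finrank k ((MvPolynomial (Fin n) k ⧸ I) ⧸ A) := by
    refine (LinearEquiv.finrank_eq ?_).symm
    exact (Submodule.Quotient.restrictScalarsEquiv k (Ideal.map mk J₁)).trans
      (DoubleQuot.quotQuotEquivQuotSupₐ k I J₁).toLinearEquiv
  have hQB : finrank k (MvPolynomial (Fin n) k ⧸ (I ⊔ J₂)) =
      finrank k ((MvPolynomial (Fin n) k ⧸ I) ⧸ B) := by
    refine (LinearEquiv.finrank_eq ?_).symm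
    exact (Submodule.Quotient.restrictScalarsEquiv k (Ideal.map mk J₂)).trans
      (DoubleQuot.quotQuotEquivQuotSupₐ k I J₂).toLinearEquiv
  -- rank-nullity
  have hrnA : finrank k ((MvPolynomial (Fin n) k ⧸ I) ⧸ A) + finrank k A =
      finrank k (MvPolynomial (Fin n) k ⧸ I) :=
    Submodule.finrank_quotient_add_finrank A
  have hrnB : finrank k ((MvPolynomial (Fin n) k ⧸ I) ⧸ B) + finrank k B =
      finrank k (MvPolynomial (Fin n) k ⧸ I) :=
    Submodule.finrank_quotient_add_finrank B
  -- the surjection M ⧸ B ↠ A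
  have hAB : finrank k A ≤ finrank k ((MvPolynomial (Fin n) k ⧸ I) ⧸ B) := by
    have hmem : ∀ x : MvPolynomial (Fin n) k ⧸ I, mk f * x ∈ A := by
      intro x
      obtain ⟨y, rfl⟩ := hmksurj x
      rw [hA]
      exact Ideal.mem_map_of_mem mk (J₁.mul_mem_right y hfJ₁)
    set ψ : (MvPolynomial (Fin n) k ⧸ I) →ₗ[k] A :=
      (LinearMap.mulLeft k (mk f)).codRestrict A hmem with hψ
    have hker : B ≤ LinearMap.ker ψ := by
      intro x hx
      rw [hB, Submodule.restrictScalars_mem] at hx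
      obtain ⟨b, hb, rfl⟩ := Ideal.mem_map_iff_of_surjective mk hmksurj |>.mp hx
      rw [LinearMap.mem_ker]
      apply Subtype.ext
      show mk f * mk b = 0
      rw [← map_mul]
      exact Ideal.Quotient.eq_zero_iff_mem.mpr (hE ⟨J₁.mul_mem_right b hfJ₁,
        J₂.mul_mem_left f hb⟩)
    set ψ' : ((MvPolynomial (Fin n) k ⧸ I) ⧸ B) →ₗ[k] A := Submodule.liftQ B ψ hker with hψ'
    have hsurj : Function.Surjective ψ' := by
      rintro ⟨a, ha⟩
      rw [hA, Submodule.restrictScalars_mem] at ha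
      obtain ⟨y, hy, rfl⟩ := Ideal.mem_map_iff_of_surjective mk hmksurj |>.mp ha
      obtain ⟨g, hg⟩ := hkey y hy
      refine ⟨Submodule.Quotient.mk (mk g), ?_⟩
      apply Subtype.ext
      show mk f * mk g = mk y
      rw [← map_mul]
      have h0 : mk (y - g * f) = 0 := Ideal.Quotient.eq_zero_iff_mem.mpr hg
      rw [map_sub] at h0
      have h3 : mk y = mk (g * f) := sub_eq_zero.mp h0
      rw [mul_comm]
      exact h3.symm
    exact finrank_le_of_surj ψ' hsurj
  -- the quotient by A ⊔ B has dimension ≤ 1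
  have hq1 : finrank k ((MvPolynomial (Fin n) k ⧸ I) ⧸ (A ⊔ B)) ≤ 1 := by
    have : Function.Surjective
        (LinearMap.toSpanSingleton k ((MvPolynomial (Fin n) k ⧸ I) ⧸ (A ⊔ B))
          ((A ⊔ B).mkQ (mk 1))) := by
      intro m
      obtain ⟨x, rfl⟩ := Submodule.mkQ_surjective (A ⊔ B) m
      obtain ⟨y, rfl⟩ := hmksurj x
      obtain ⟨c, hc⟩ := hconst y
      refine ⟨c, ?_⟩
      have h1 : (LinearMap.toSpanSingleton k ((MvPolynomial (Fin n) k ⧸ I) ⧸ (A ⊔ B))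
          ((A ⊔ B).mkQ (mk 1))) c = (A ⊔ B).mkQ (mk (MvPolynomial.C c)) := by
        rw [LinearMap.toSpanSingleton_apply, ← map_smul ((A ⊔ B).mkQ), ← map_smul mk]
        congr 2
        rw [Algebra.smul_def]; simp
      rw [h1, ← sub_eq_zero, ← map_sub ((A ⊔ B).mkQ), Submodule.mkQ_apply,
        Submodule.Quotient.mk_eq_zero, ← map_sub mk]
      have hmem' : MvPolynomial.C c - y ∈ J₁ ⊔ J₂ := by
        have := Submodule.neg_mem _ hc
        simpa using this
      obtain ⟨u, hu, z, hz, huz⟩ := Submodule.mem_sup.mp hmem'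
      rw [← huz, map_add]
      exact Submodule.add_mem_sup
        ((Submodule.restrictScalars_mem k _ _).mpr (Ideal.mem_map_of_mem mk hu))
        ((Submodule.restrictScalars_mem k _ _).mpr (Ideal.mem_map_of_mem mk hz))
    have h := finrank_le_of_surj _ this
    simpa using h
  have hsup : finrank k ↥(A ⊔ B) ≤ finrank k A + finrank k B := by
    have := Submodule.finrank_sup_add_finrank_inf_eq A B
    omega
  have hrnAB : finrank k ((MvPolynomial (Fin n) k ⧸ I) ⧸ (A ⊔ B)) + finrank k ↥(A ⊔ B) =
      finrank k (MvPolynomial (Fin n) k ⧸ I) :=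
    Submodule.finrank_quotient_add_finrank (A ⊔ B)
  rw [hQA, hQB]
  omega
end

section
/- On the projective line ℙ¹ over a field, for the degree-d Veronese embedding ν_d : ℙ¹ → ℙ^d (d ≥ 2), a point P of ⟨ν_d(A)⟩ for A a degree-2 non-reduced divisor 2O, with P ≠ ν_d(O), has rank exactly d: P ∈ ⟨ν_d(S)⟩ for some set S of d distinct points of ℙ¹ not containing O, and for no set of fewer than d points. -/
open MvPolynomial

/-- A linear form on `k²` with coefficient vector `a`. -/
noncomputable def linForm2 {k : Type*} [Field k] (a : Fin 2 → k) : MvPolynomial (Fin 2) k :=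
  ∑ i, MvPolynomial.C (a i) * MvPolynomial.X i

/-- Binomial expansion of a power of a binary linear form. -/
lemma linpow_aux {k : Type*} [CommRing k] (α β : k) (d : ℕ) :
    (C α * X 0 + C β * X 1 : MvPolynomial (Fin 2) k) ^ d
      = ∑ m ∈ Finset.range (d + 1),
          C (α ^ m * β ^ (d - m) * d.choose m) * (X 0 ^ m * X 1 ^ (d - m)) := by
  rw [add_pow]
  refine Finset.sum_congr rfl fun m hm => ?_
  simp only [mul_pow, ← C_pow, map_mul, map_natCast]
  ring

/-- Sums of powers of a primitive `d`-th root of unity. -/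
lemma prim_sum_aux {k : Type*} [Field k] {d : ℕ} {ζ : k} (hζ : IsPrimitiveRoot ζ d)
    (t : ℕ) : ∑ j ∈ Finset.range d, ζ ^ (j * t) = if d ∣ t then (d : k) else 0 := by
  have hpow : ∀ j, ζ ^ (j * t) = (ζ ^ t) ^ j := fun j => by rw [← pow_mul, mul_comm]
  simp_rw [hpow]
  by_cases h : d ∣ t
  · simp only [h, if_true, (hζ.pow_eq_one_iff_dvd t).2 h, one_pow, Finset.sum_const,
      Finset.card_range, nsmul_eq_mul, mul_one]
  · simp only [h, if_false]
    have hx : ζ ^ t ≠ 1 := fun e => h ((hζ.pow_eq_one_iff_dvd t).1 e)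
    rw [geom_sum_eq hx d, ← pow_mul, mul_comm t d, pow_mul, hζ.pow_eq_one, one_pow,
      sub_self, zero_div]

/-- Coefficients of a power of a one-variable linear polynomial. -/
lemma pcoeff_aux {k : Type*} [Field k] (α β : k) (d m : ℕ) (hm : m ≤ d) :
    ((Polynomial.C α * Polynomial.X + Polynomial.C β) ^ d).coeff m
      = d.choose m * (α ^ m * β ^ (d - m)) := by
  rw [add_pow, Polynomial.finset_sum_coeff]
  have hterm : ∀ j ∈ Finset.range (d + 1),
      (((Polynomial.C α * Polynomial.X) ^ j * Polynomial.C β ^ (d - j)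
          * (d.choose j : Polynomial k))).coeff m
        = if m = j then (d.choose j : k) * (α ^ j * β ^ (d - j)) else 0 := by
    intro j _
    have : (Polynomial.C α * Polynomial.X) ^ j * Polynomial.C β ^ (d - j)
          * (d.choose j : Polynomial k)
        = Polynomial.C ((d.choose j : k) * (α ^ j * β ^ (d - j))) * Polynomial.X ^ j := by
      rw [mul_pow, ← Polynomial.C_pow, ← Polynomial.C_pow, ← Polynomial.C_eq_natCast]
      simp only [map_mul]
      ring
    rw [this, Polynomial.coeff_C_mul, Polynomial.coeff_X_pow]
    split <;> simp
  rw [Finset.sum_congr rfl hterm, Finset.sum_ite_eq (Finset.range (d + 1)) m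
    (fun j => (d.choose j : k) * (α ^ j * β ^ (d - j))), if_pos (Finset.mem_range.2 (by omega))]

/-- The existence half: the explicit decomposition via roots of unity. -/
lemma exists_decomp_aux (k : Type*) [Field k] [IsAlgClosed k] [CharZero k] (d : ℕ) (hd : 2 ≤ d)
    {ζ : k} (hζ : IsPrimitiveRoot ζ d) :
    ∑ j : Fin d, (ζ ^ ((j : ℕ) * (d - 1)) / (d : k) ^ 2) •
        linForm2 ![(1 : k), ζ ^ (j : ℕ)] ^ d
      = (MvPolynomial.X 0 ^ (d - 1) * MvPolynomial.X 1 : MvPolynomial (Fin 2) k) := by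
  have hdk : (d : k) ≠ 0 := Nat.cast_ne_zero.2 (by omega)
  have hlf : ∀ j : Fin d, linForm2 ![(1 : k), ζ ^ (j : ℕ)]
      = C (1:k) * X 0 + C (ζ ^ (j:ℕ)) * X 1 := by
    intro j
    simp [linForm2, Fin.sum_univ_two]
  calc ∑ j : Fin d, (ζ ^ ((j : ℕ) * (d - 1)) / (d : k) ^ 2) •
        linForm2 ![(1 : k), ζ ^ (j : ℕ)] ^ d
      = ∑ j ∈ Finset.range d, ∑ m ∈ Finset.range (d + 1),
          C (ζ ^ (j * (d - 1)) / (d : k) ^ 2 * ((ζ ^ j) ^ (d - m) * (d.choose m : k)))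
            * (X 0 ^ m * X 1 ^ (d - m)) := by
        rw [← Fin.sum_univ_eq_sum_range fun j =>
          ∑ m ∈ Finset.range (d + 1),
            C (ζ ^ (j * (d - 1)) / (d : k) ^ 2 * ((ζ ^ j) ^ (d - m) * (d.choose m : k)))
              * (X 0 ^ m * X 1 ^ (d - m))]
        refine Finset.sum_congr rfl fun j _ => ?_
        rw [hlf, linpow_aux, Finset.smul_sum]
        refine Finset.sum_congr rfl fun m _ => ?_
        rw [smul_eq_C_mul, ← mul_assoc, ← map_mul]
        congr 2
        ring
    _ = ∑ m ∈ Finset.range (d + 1),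
          C ((if d ∣ (d - 1 + (d - m)) then (d:k) else 0) / (d : k) ^ 2 * (d.choose m : k))
            * (X 0 ^ m * X 1 ^ (d - m)) := by
        rw [Finset.sum_comm]
        refine Finset.sum_congr rfl fun m _ => ?_
        rw [← Finset.sum_mul, ← map_sum]
        congr 2
        have hterm : ∀ j, ζ ^ (j * (d - 1)) / (d:k)^2 * ((ζ ^ j)^(d-m) * (d.choose m : k))
            = ζ ^ (j*(d-1+(d-m))) / (d:k)^2 * (d.choose m : k) := by
          intro j
          rw [Nat.mul_add, pow_add, ← pow_mul]
          ring
        simp_rw [hterm]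
        rw [← Finset.sum_mul, ← Finset.sum_div, prim_sum_aux hζ]
    _ = X 0 ^ (d - 1) * X 1 := by
        rw [Finset.sum_eq_single (d - 1)]
        · have h1 : d - (d - 1) = 1 := by omega
          have hdvd : d ∣ d - 1 + (d - (d - 1)) := ⟨1, by omega⟩
          rw [if_pos hdvd, h1, Nat.choose_symm (by omega : 1 ≤ d), Nat.choose_one_right, pow_one]
          have : (d : k) / (d : k) ^ 2 * (d : k) = 1 := by
            field_simp
          rw [this, map_one, one_mul]
        · intro m hm hne
          rw [Finset.mem_range] at hm
          have : ¬ d ∣ d - 1 + (d - m) := by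
            rintro ⟨q, hq⟩
            have hq2 : q < 2 := by
              by_contra h
              have : d * 2 ≤ d * q := Nat.mul_le_mul_left d (by omega)
              omega
            interval_cases q <;> omega
          rw [if_neg this, zero_div, zero_mul, map_zero, zero_mul]
        · intro h
          exact absurd (Finset.mem_range.2 (by omega)) h

/-- The lower-bound half: any power-sum decomposition of `x^{d-1} y` needs at least `d` terms. -/
lemma rank_lower_aux (k : Type*) [Field k] [CharZero k] (d : ℕ) (hd : 2 ≤ d)
    (r : ℕ) (c : Fin r → k) (a : Fin r → (Fin 2 → k))
    (heq : (MvPolynomial.X 0 ^ (d - 1) * MvPolynomial.X 1 : MvPolynomial (Fin 2) k) =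
        ∑ i, c i • linForm2 (a i) ^ d) : d ≤ r := by
  classical
  by_contra hlt
  push_neg at hlt
  have hre : r ≤ d - 1 := by omega
  have hdk : (d : k) ≠ 0 := Nat.cast_ne_zero.2 (by omega)
  -- one-variable identity
  have hpoly : (Polynomial.X ^ (d - 1) : Polynomial k) =
      ∑ i, c i • (Polynomial.C (a i 0) * Polynomial.X + Polynomial.C (a i 1)) ^ d := by
    have h := congrArg (MvPolynomial.aeval (![Polynomial.X, 1] : Fin 2 → Polynomial k)) heq
    simp only [map_mul, map_pow, map_sum, map_smul, aeval_X, Matrix.cons_val_zero,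
      Matrix.cons_val_one, Matrix.head_cons, mul_one] at h
    convert h using 2 with i
    congr 1
    simp [linForm2, Fin.sum_univ_two, map_add, map_mul, aeval_X, algebraMap_eq]
  -- coefficient equations
  set S : ℕ → k := fun m => ∑ i, c i * (a i 0 ^ m * a i 1 ^ (d - m)) with hSdef
  have hS : ∀ m ≤ d, (d.choose m : k) * S m = if m = d - 1 then 1 else 0 := by
    intro m hm
    have h := congrArg (fun p : Polynomial k => p.coeff m) hpoly
    simp only [Polynomial.coeff_X_pow, Polynomial.finset_sum_coeff, Polynomial.coeff_smul,
      smul_eq_mul] at h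
    rw [Finset.sum_congr rfl (fun i _ => by rw [pcoeff_aux (a i 0) (a i 1) d m hm])] at h
    calc (d.choose m : k) * S m
        = ∑ i, c i * ((d.choose m : k) * (a i 0 ^ m * a i 1 ^ (d - m))) := by
          rw [hSdef, Finset.mul_sum]
          exact Finset.sum_congr rfl fun i _ => by ring
      _ = if m = d - 1 then 1 else 0 := h.symm
  have hSval : ∀ m ≤ d - 1, S m = if m = d - 1 then (d : k)⁻¹ else 0 := by
    intro m hm
    have hch : (d.choose m : k) ≠ 0 := Nat.cast_ne_zero.2 (Nat.choose_pos (by omega)).ne'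
    have h := hS m (by omega)
    by_cases hm1 : m = d - 1
    · subst hm1
      rw [if_pos rfl] at h ⊢
      have hc : (d.choose (d - 1) : k) = (d : k) := by
        rw [Nat.choose_symm (by omega : 1 ≤ d), Nat.choose_one_right]
      rw [hc] at h
      exact eq_inv_of_mul_eq_one_left (by rw [mul_comm]; exact h)
    · rw [if_neg hm1] at h ⊢
      exact (mul_eq_zero.1 h).resolve_left hch
  set E : Finset k := Finset.univ.image (fun i : Fin r => a i 0 / a i 1) with hE
  set e := E.card with he
  have her : e ≤ r := by
    rw [he, hE]
    exact le_trans Finset.card_image_le (by simp)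
  set p : Polynomial k := ∏ τ ∈ E, (Polynomial.X - Polynomial.C τ) with hp
  have hmon : p.Monic := Polynomial.monic_prod_of_monic _ _ fun τ _ => Polynomial.monic_X_sub_C τ
  have hdeg : p.natDegree = e := by
    rw [hp, Polynomial.natDegree_prod _ _ (fun τ _ => Polynomial.X_sub_C_ne_zero τ)]
    simp
    exact he.symm
  have hcoefe : p.coeff e = 1 := by rw [← hdeg]; exact hmon.coeff_natDegree
  set n0 := d - 1 - e with hn0
  have hkey : ∀ i : Fin r, ∑ j ∈ Finset.range (e + 1),
      p.coeff j * (a i 0 ^ (n0 + j) * a i 1 ^ (d - (n0 + j))) = 0 := by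
    intro i
    by_cases hb : a i 1 = 0
    · refine Finset.sum_eq_zero fun j hj => ?_
      rw [Finset.mem_range] at hj
      have hz : d - (n0 + j) ≠ 0 := by omega
      rw [hb, zero_pow hz, mul_zero, mul_zero]
    · have hτ : a i 0 / a i 1 ∈ E := by
        rw [hE]; exact Finset.mem_image_of_mem _ (Finset.mem_univ i)
      have hev : p.eval (a i 0 / a i 1) = 0 := by
        rw [hp, Polynomial.eval_prod]
        exact Finset.prod_eq_zero hτ (by simp)
      have hterm : ∀ j ∈ Finset.range (e + 1),
          p.coeff j * (a i 0 ^ (n0 + j) * a i 1 ^ (d - (n0 + j)))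
            = (a i 0 ^ n0 * a i 1 * a i 1 ^ e) * (p.coeff j * (a i 0 / a i 1) ^ j) := by
        intro j hj
        rw [Finset.mem_range] at hj
        have h1 : d - (n0 + j) = (e - j) + 1 := by omega
        have h2 : e = j + (e - j) := by omega
        rw [h1, pow_add, pow_add, pow_one, div_pow]
        rw [show a i 1 ^ e = a i 1 ^ j * a i 1 ^ (e - j) by rw [← pow_add, ← h2]]
        field_simp
      rw [Finset.sum_congr rfl hterm, ← Finset.mul_sum]
      have : ∑ j ∈ Finset.range (e + 1), p.coeff j * (a i 0 / a i 1) ^ j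
          = p.eval (a i 0 / a i 1) := by
        rw [Polynomial.eval_eq_sum_range, hdeg]
      rw [this, hev, mul_zero]
  have hT0 : ∑ j ∈ Finset.range (e + 1), p.coeff j * S (n0 + j) = 0 := by
    have expand : ∀ j ∈ Finset.range (e + 1), p.coeff j * S (n0 + j)
        = ∑ i : Fin r, c i * (p.coeff j * (a i 0 ^ (n0 + j) * a i 1 ^ (d - (n0 + j)))) := by
      intro j _
      rw [hSdef, Finset.mul_sum]
      exact Finset.sum_congr rfl fun i _ => by ring
    rw [Finset.sum_congr rfl expand, Finset.sum_comm]
    refine Finset.sum_eq_zero fun i _ => ?_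
    rw [← Finset.mul_sum, hkey i, mul_zero]
  have hT1 : ∑ j ∈ Finset.range (e + 1), p.coeff j * S (n0 + j) = (d : k)⁻¹ := by
    have hval : ∀ j ∈ Finset.range (e + 1), p.coeff j * S (n0 + j)
        = if j = e then (d : k)⁻¹ else 0 := by
      intro j hj
      rw [Finset.mem_range] at hj
      rw [hSval _ (by omega)]
      by_cases hje : j = e
      · subst hje
        rw [if_pos (by omega), if_pos rfl, hcoefe, one_mul]
      · rw [if_neg (by omega), mul_zero, if_neg hje]
    rw [Finset.sum_congr rfl hval, Finset.sum_ite_eq' (Finset.range (e + 1)) e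
      (fun _ => (d : k)⁻¹), if_pos (Finset.mem_range.2 (by omega))]
  rw [hT0] at hT1
  exact hdk (by rwa [eq_comm, inv_eq_zero] at hT1)

/-- (Sylvester.)  For `d ≥ 2`, the binary form `x^{d-1} y` — the generic point of
`⟨ν_d(2O)⟩ \ {ν_d(O)}` for the double point `2O` at `O = [1:0]` — has rank exactly `d`:
it is a linear combination of `d`-th powers of `d` pairwise non-proportional linear forms,
none of them vanishing at `O` (i.e. none proportional to `x`, so the corresponding `d`
distinct points of `ℙ¹` avoid `O`), and it is not a linear combination of fewer than `d`
such powers. -/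
theorem stmt16 (k : Type*) [Field k] [IsAlgClosed k] [CharZero k] (d : ℕ) (hd : 2 ≤ d) :
    (∃ (c : Fin d → k) (a : Fin d → (Fin 2 → k)),
      (∀ i, a i ≠ 0) ∧
      (∀ i j, i ≠ j → ∀ t : k, a i ≠ t • a j) ∧
      (∀ i, a i 1 ≠ 0) ∧
      (MvPolynomial.X 0 ^ (d - 1) * MvPolynomial.X 1 : MvPolynomial (Fin 2) k) =
        ∑ i, c i • linForm2 (a i) ^ d) ∧
    (∀ (r : ℕ) (c : Fin r → k) (a : Fin r → (Fin 2 → k)),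
      (MvPolynomial.X 0 ^ (d - 1) * MvPolynomial.X 1 : MvPolynomial (Fin 2) k) =
        ∑ i, c i • linForm2 (a i) ^ d → d ≤ r) := by
  obtain ⟨ζ, hζ⟩ : ∃ ζ : k, IsPrimitiveRoot ζ d :=
    by
      have : NeZero (d : k) := ⟨Nat.cast_ne_zero.2 (by omega)⟩
      obtain ⟨z, hz⟩ := IsAlgClosed.exists_root (Polynomial.cyclotomic d k)
        (Polynomial.degree_cyclotomic_pos d k (by omega)).ne.symm
      exact ⟨z, Polynomial.isRoot_cyclotomic_iff.1 hz⟩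
  constructor
  · refine ⟨fun j => ζ ^ ((j : ℕ) * (d - 1)) / (d : k) ^ 2,
      fun j => ![(1 : k), ζ ^ (j : ℕ)], ?_, ?_, ?_, ?_⟩
    · intro i h
      have := congrFun h 0
      simp at this
    · intro i j hij t h
      have h0 := congrFun h 0
      have h1 := congrFun h 1
      simp only [Matrix.cons_val_zero, Matrix.cons_val_one, Matrix.head_cons,
        Pi.smul_apply, smul_eq_mul, mul_one] at h0 h1
      rw [← h0, one_mul] at h1
      exact hij (Fin.ext (hζ.pow_inj i.isLt j.isLt h1))
    · intro i
      simp only [Matrix.cons_val_one, Matrix.head_cons]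
      exact pow_ne_zero _ (hζ.ne_zero (by omega))
    · exact (exists_decomp_aux k d hd hζ).symm
  · exact fun r c a h => rank_lower_aux k d hd r c a h
end
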